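/- Let G be a topological group, Q a dense subgroup of G, and 𝒱 a basis of open neighbourhoods of the identity of G. Define rk_{Q,𝒱}(V,U) by the same recursion as rk(V,U), except that in the clause for ordinals β > 0 the witnessing open identity neighbourhood W is required to belong to 𝒱 and the condition rk_{Q,𝒱}(V, gWg⁻¹) < β is required only for g ∈ Q ∩ U. Then for all open identity neighbourhoods U, V of G and every ordinal β: rk(V,U) ≤ β if and only if rk_{Q,𝒱}(V,U) ≤ β; in particular rk(V,U) = rk_{Q,𝒱}(V,U). -/

import Mathlib

universe u v w x

/-- The conjugate `g W g⁻¹` of a subset `W` of a group by the element `g`. -/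
def conjSet {G : Type u} [Group G] (g : G) (W : Set G) : Set G :=
  (fun x => g * x * g⁻¹) '' W

/-- `RkLe V U β` asserts that the ordinal rank `rk(V, U)` is at most `β`:
either `U ⊆ V` (rank `0`), or there is an open identity neighbourhood `W`
such that `rk(V, g W g⁻¹) < β` for every `g ∈ U`. -/
def RkLe {G : Type u} [Group G] [TopologicalSpace G] (V U : Set G) (β : Ordinal.{v}) : Prop :=
  U ⊆ V ∨ ∃ W : Set G, IsOpen W ∧ (1 : G) ∈ W ∧
    ∀ g ∈ U, ∃ γ : Ordinal.{v}, ∃ _ : γ < β, RkLe V (conjSet g W) γ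
termination_by β

/-- The rank `rk_{Q,𝒱}(V, U)` computed relative to a subset `Q` of the group and a
family `𝒱` of identity neighbourhoods: in the recursive clause the witness `W` must
belong to `𝒱` and the condition is only required for `g ∈ Q ∩ U`. -/
def RkLeB {G : Type u} [Group G] [TopologicalSpace G] (Q : Set G) (𝒱 : Set (Set G))
    (V U : Set G) (β : Ordinal.{v}) : Prop :=
  U ⊆ V ∨ ∃ W ∈ 𝒱,
    ∀ g ∈ Q ∩ U, ∃ γ : Ordinal.{v}, ∃ _ : γ < β, RkLeB Q 𝒱 V (conjSet g W) γ
termination_by β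

lemma conjSet_isOpen {G : Type u} [Group G] [TopologicalSpace G] [IsTopologicalGroup G]
    (g : G) {W : Set G} (h : IsOpen W) : IsOpen (conjSet g W) := by
  exact ((Homeomorph.mulLeft g).trans (Homeomorph.mulRight g⁻¹)).isOpenMap W h

lemma one_mem_conjSet {G : Type u} [Group G] (g : G) {W : Set G} (h : (1 : G) ∈ W) :
    (1 : G) ∈ conjSet g W := ⟨1, h, by group⟩

lemma conjSet_mono {G : Type u} [Group G] (g : G) {W W' : Set G} (h : W' ⊆ W) :
    conjSet g W' ⊆ conjSet g W := Set.image_mono h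

lemma rkLe_mono {G : Type u} [Group G] [TopologicalSpace G] {V U U' : Set G}
    {β : Ordinal.{v}} (h : U' ⊆ U) (hr : RkLe V U β) : RkLe V U' β := by
  rw [RkLe] at hr ⊢
  rcases hr with h1 | ⟨W, hWo, hW1, hW⟩
  · exact Or.inl (h.trans h1)
  · exact Or.inr ⟨W, hWo, hW1, fun g hg => hW g (h hg)⟩

/-- If `Q` is a dense subgroup of `G` and `𝒱` is a basis of open identity neighbourhoods,
then `rk(V, U) = rk_{Q,𝒱}(V, U)` for all open identity neighbourhoods `U, V`. -/
theorem rk_eq_rk_of_dense_of_basis {G : Type u} [Group G] [TopologicalSpace G]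
    [IsTopologicalGroup G] (Q : Subgroup G) (hQ : Dense (Q : Set G)) (𝒱 : Set (Set G))
    (h𝒱 : ∀ W ∈ 𝒱, IsOpen W ∧ (1 : G) ∈ W)
    (h𝒱basis : ∀ S : Set G, IsOpen S → (1 : G) ∈ S → ∃ W ∈ 𝒱, W ⊆ S)
    (U V : Set G) (hUo : IsOpen U) (hU1 : (1 : G) ∈ U) (hVo : IsOpen V) (hV1 : (1 : G) ∈ V)
    (β : Ordinal.{v}) :
    RkLe V U β ↔ RkLeB (Q : Set G) 𝒱 V U β := by
  revert U
  induction β using Ordinal.induction with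
  | h β IH =>
    intro U hUo hU1
    constructor
    · intro h
      rw [RkLe] at h
      rcases h with hUV | ⟨W, hWo, hW1, hW⟩
      · rw [RkLeB]; exact Or.inl hUV
      · obtain ⟨W', hW'𝒱, hW'W⟩ := h𝒱basis W hWo hW1
        obtain ⟨hW'o, hW'1⟩ := h𝒱 W' hW'𝒱
        rw [RkLeB]
        refine Or.inr ⟨W', hW'𝒱, fun g hg => ?_⟩
        obtain ⟨γ, hγ, hrk⟩ := hW g hg.2
        refine ⟨γ, hγ, ?_⟩
        exact (IH γ hγ (conjSet g W') (conjSet_isOpen g hW'o)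
          (one_mem_conjSet g hW'1)).mp (rkLe_mono (conjSet_mono g hW'W) hrk)
    · intro h
      rw [RkLeB] at h
      rcases h with hUV | ⟨W, hW𝒱, hW⟩
      · rw [RkLe]; exact Or.inl hUV
      · obtain ⟨hWo, hW1⟩ := h𝒱 W hW𝒱
        obtain ⟨O₁, hO₁o, hO₁1, hO₁W⟩ :=
          exists_open_nhds_one_mul_subset (hWo.mem_nhds hW1)
        obtain ⟨O₂, hO₂o, hO₂1, hO₂O₁⟩ :=
          exists_open_nhds_one_mul_subset (hO₁o.mem_nhds hO₁1)
        set O : Set G := O₂ ∩ O₂⁻¹ with hO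
        have hOo : IsOpen O := hO₂o.inter hO₂o.inv
        have hO1 : (1 : G) ∈ O := ⟨hO₂1, by simpa using hO₂1⟩
        have hO₂sub : O₂ ⊆ O₁ := fun x hx => hO₂O₁ (by simpa using Set.mul_mem_mul hx hO₂1)
        have hkey : ∀ a ∈ O, ∀ b ∈ O, ∀ c ∈ O, a⁻¹ * b * c ∈ W := by
          intro a ha b hb c hc
          have ha' : a⁻¹ ∈ O₂ := ha.2
          have hbc : b * c ∈ O₁ := hO₂O₁ (Set.mul_mem_mul hb.1 hc.1)
          have : a⁻¹ * (b * c) ∈ W := hO₁W (Set.mul_mem_mul (hO₂sub ha') hbc)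
          simpa [mul_assoc] using this
        rw [RkLe]
        refine Or.inr ⟨O, hOo, hO1, fun g hg => ?_⟩
        have hTo : IsOpen (U ∩ (fun x => g⁻¹ * x) ⁻¹' O) :=
          hUo.inter (hOo.preimage (continuous_mul_left g⁻¹))
        have hTne : (U ∩ (fun x => g⁻¹ * x) ⁻¹' O).Nonempty :=
          ⟨g, hg, by simpa using hO1⟩
        obtain ⟨q, hqQ, hqU, hqO⟩ := hQ.exists_mem_open hTo hTne
        obtain ⟨γ, hγ, hrkB⟩ := hW q ⟨hqQ, hqU⟩
        refine ⟨γ, hγ, ?_⟩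
        have hle : RkLe V (conjSet q W) γ :=
          (IH γ hγ (conjSet q W) (conjSet_isOpen q hWo) (one_mem_conjSet q hW1)).mpr hrkB
        refine rkLe_mono ?_ hle
        rintro _ ⟨x, hx, rfl⟩
        set w₀ : G := g⁻¹ * q with hw₀def
        have hw₀ : w₀ ∈ O := hqO
        refine ⟨w₀⁻¹ * x * w₀, hkey w₀ hw₀ x hx w₀ hw₀, ?_⟩
        have hgq : g = q * w₀⁻¹ := by rw [hw₀def]; group
        rw [hgq]; group
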